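/- Let $r > 0$ and set $R = ar + b$ with $a > 0$ and $0 < b \leq 1$. Then $\frac{1}{\pi R}\int_{-\pi/2}^{\pi/2} \cos\theta \cdot \log\left(1 + \frac{1}{b\cos\theta}\right) d\theta \leq \frac{1}{\pi R}\left(\frac{\pi}{b} - 4\sqrt{b^{-2}-1}\,\arctan\sqrt{\frac{b^{-1}-1}{b^{-1}+1}} - 2\log(2b)\right)$, where the integral is interpreted as an improper integral (the integrand extends continuously by $0$ at $\theta = \pm\pi/2$ since $\cos\theta \log(1/\cos\theta) \to 0$). -/

import Mathlib

open Real Set intervalIntegral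

set_option maxHeartbeats 1000000

lemma key_integral (b : ℝ) (hb0 : 0 < b) (hb1 : b ≤ 1) :
    ∫ θ in (-(π / 2))..(π / 2), Real.cos θ * Real.log (1 + 1 / (b * Real.cos θ)) =
      π / b - 4 * Real.sqrt (b⁻¹ ^ 2 - 1) *
        Real.arctan (Real.sqrt ((b⁻¹ - 1) / (b⁻¹ + 1))) - 2 * Real.log (2 * b) := by
  have hbne : b ≠ 0 := hb0.ne'
  have hbinv : 1 ≤ b⁻¹ := (one_le_inv₀ hb0).2 hb1
  have hb1' : 0 < 1 + b := by linarith
  set c := Real.sqrt (b⁻¹ ^ 2 - 1) with hcdef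
  set k := Real.sqrt ((b⁻¹ - 1) / (b⁻¹ + 1)) with hkdef
  have hknn : (0:ℝ) ≤ (b⁻¹ - 1) / (b⁻¹ + 1) := by
    apply div_nonneg <;> linarith
  have hck : c * k = (1 - b) / b := by
    rw [hcdef, hkdef, ← Real.sqrt_mul (by nlinarith)]
    have h1 : (b⁻¹ ^ 2 - 1) * ((b⁻¹ - 1) / (b⁻¹ + 1)) = (b⁻¹ - 1) ^ 2 := by
      field_simp
      ring
    rw [h1, Real.sqrt_sq (by linarith)]
    field_simp
  have hk2 : k ^ 2 = (1 - b) / (1 + b) := by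
    rw [hkdef, Real.sq_sqrt hknn]
    rw [div_eq_div_iff (by linarith) (by linarith)]
    field_simp
  set F : ℝ → ℝ := fun θ => θ / b - 2 * c * Real.arctan (k * Real.tan (θ / 2))
      + (1 - Real.sin θ) * Real.log (1 - Real.sin θ) / 2
      - (1 + Real.sin θ) * Real.log (1 + Real.sin θ) / 2
      + Real.sin θ * Real.log (1 + b * Real.cos θ) - Real.sin θ * Real.log b with hFdef
  have hle : -(π/2) ≤ π/2 := by linarith [pi_pos]
  have hlog1 : ContinuousOn (fun θ : ℝ => Real.log (1 + b * Real.cos θ))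
      (Icc (-(π/2)) (π/2)) := by
    apply ContinuousOn.log
    · fun_prop
    · intro x hx
      have : 0 ≤ Real.cos x := Real.cos_nonneg_of_mem_Icc (by
        constructor <;> [linarith [hx.1]; exact hx.2])
      nlinarith
  -- continuity of F on Icc
  have hcont : ContinuousOn F (Icc (-(π/2)) (π/2)) := by
    have htan : ContinuousOn (fun θ : ℝ => Real.tan (θ / 2)) (Icc (-(π/2)) (π/2)) := by
      apply Real.continuousOn_tan.comp (continuous_id.div_const 2).continuousOn
      intro x hx
      simp only [mem_setOf_eq, id_eq]
      have : 0 < Real.cos (x / 2) := by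
        apply Real.cos_pos_of_mem_Ioo
        constructor
        · nlinarith [hx.1, pi_pos]
        · nlinarith [hx.2, pi_pos]
      exact this.ne'
    apply ContinuousOn.sub
    apply ContinuousOn.add
    apply ContinuousOn.sub
    apply ContinuousOn.add
    apply ContinuousOn.sub
    · exact (continuous_id.div_const b).continuousOn
    · exact continuousOn_const.mul (Real.continuous_arctan.comp_continuousOn
        (continuousOn_const.mul htan))
    · exact ((Real.continuous_mul_log.comp (continuous_const.sub Real.continuous_sin)).div_const
        2).continuousOn
    · exact ((Real.continuous_mul_log.comp (continuous_const.add Real.continuous_sin)).div_const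
        2).continuousOn
    · exact Real.continuous_sin.continuousOn.mul hlog1
    · fun_prop
  -- integrand equals a nice continuous function on Icc
  have hfg : ∀ θ ∈ Icc (-(π/2)) (π/2),
      Real.cos θ * Real.log (1 + 1 / (b * Real.cos θ)) =
      Real.cos θ * Real.log (1 + b * Real.cos θ) - Real.cos θ * Real.log b
        - Real.cos θ * Real.log (Real.cos θ) := by
    intro θ hθ
    have hcnn : 0 ≤ Real.cos θ := Real.cos_nonneg_of_mem_Icc ⟨by linarith [hθ.1], hθ.2⟩
    rcases hcnn.eq_or_lt with h | h
    · rw [← h]; simp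
    · have h1 : 1 + 1 / (b * Real.cos θ) = (1 + b * Real.cos θ) / (b * Real.cos θ) := by
        field_simp
        ring
      rw [h1, Real.log_div (by positivity) (by positivity), Real.log_mul hbne h.ne']
      ring
  have hint : IntervalIntegrable (fun θ => Real.cos θ * Real.log (1 + 1 / (b * Real.cos θ)))
      MeasureTheory.volume (-(π/2)) (π/2) := by
    apply ContinuousOn.intervalIntegrable
    rw [uIcc_of_le hle]
    have hgood : ContinuousOn (fun θ : ℝ => Real.cos θ * Real.log (1 + b * Real.cos θ)
        - Real.cos θ * Real.log b - Real.cos θ * Real.log (Real.cos θ))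
        (Icc (-(π/2)) (π/2)) := by
      apply ContinuousOn.sub
      apply ContinuousOn.sub
      · exact Real.continuous_cos.continuousOn.mul hlog1
      · fun_prop
      · exact (Real.continuous_mul_log.comp Real.continuous_cos).continuousOn
    exact hgood.congr hfg
  -- derivative on the interior
  have hderiv : ∀ x ∈ Ioo (-(π/2)) (π/2),
      HasDerivWithinAt F (Real.cos x * Real.log (1 + 1 / (b * Real.cos x))) (Ioi x) x := by
    intro x hx
    have hcos : 0 < Real.cos x := Real.cos_pos_of_mem_Ioo hx
    have hsin2 : Real.sin x ^ 2 = 1 - Real.cos x ^ 2 := by nlinarith [Real.sin_sq_add_cos_sq x]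
    have hs1 : Real.sin x < 1 := by nlinarith
    have hs1' : -1 < Real.sin x := by nlinarith
    have hchalf : 0 < Real.cos (x/2) := by
      apply Real.cos_pos_of_mem_Ioo
      constructor
      · nlinarith [hx.1, pi_pos]
      · nlinarith [hx.2, pi_pos]
    have hshalf : Real.sin (x/2) ^ 2 = 1 - Real.cos (x/2) ^ 2 := by
      nlinarith [Real.sin_sq_add_cos_sq (x/2)]
    have hcosx2 : Real.cos x = 2 * Real.cos (x/2) ^ 2 - 1 := by
      have h := Real.cos_two_mul (x/2)
      rw [show 2 * (x/2) = x by ring] at h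
      linarith
    have hbc : 0 < 1 + b * Real.cos x := by have := mul_pos hb0 hcos; linarith
    have h1 : HasDerivAt (fun θ : ℝ => θ / b) (1 / b) x := by
      simpa using (hasDerivAt_id x).div_const b
    have htanh : HasDerivAt (fun θ : ℝ => Real.tan (θ / 2))
        (1 / Real.cos (x/2) ^ 2 * (1/2)) x := by
      have h := (Real.hasDerivAt_tan hchalf.ne').comp x ((hasDerivAt_id x).div_const 2)
      simpa [Function.comp_def] using h
    have h2 : HasDerivAt (fun θ : ℝ => Real.arctan (k * Real.tan (θ / 2)))
        (1 / (1 + (k * Real.tan (x/2)) ^ 2) * (k * (1 / Real.cos (x/2) ^ 2 * (1/2)))) x := by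
      have h := (Real.hasDerivAt_arctan (k * Real.tan (x/2))).comp x (htanh.const_mul k)
      simpa [Function.comp_def] using h
    have hsm : HasDerivAt (fun θ : ℝ => 1 - Real.sin θ) (-Real.cos x) x := by
      simpa using (Real.hasDerivAt_sin x).const_sub 1
    have hsp : HasDerivAt (fun θ : ℝ => 1 + Real.sin θ) (Real.cos x) x := by
      simpa using (Real.hasDerivAt_sin x).const_add 1
    have h3 : HasDerivAt (fun θ : ℝ => (1 - Real.sin θ) * Real.log (1 - Real.sin θ) / 2)
        ((-Real.cos x * Real.log (1 - Real.sin x)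
          + (1 - Real.sin x) * ((1 - Real.sin x)⁻¹ * -Real.cos x)) / 2) x := by
      have hl : HasDerivAt (fun θ : ℝ => Real.log (1 - Real.sin θ))
          ((1 - Real.sin x)⁻¹ * -Real.cos x) x :=
        by have h := (Real.hasDerivAt_log (by linarith : (1:ℝ) - Real.sin x ≠ 0)).comp x hsm; exact h
      exact (hsm.mul hl).div_const 2
    have h4 : HasDerivAt (fun θ : ℝ => (1 + Real.sin θ) * Real.log (1 + Real.sin θ) / 2)
        ((Real.cos x * Real.log (1 + Real.sin x)
          + (1 + Real.sin x) * ((1 + Real.sin x)⁻¹ * Real.cos x)) / 2) x := by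
      have hl : HasDerivAt (fun θ : ℝ => Real.log (1 + Real.sin θ))
          ((1 + Real.sin x)⁻¹ * Real.cos x) x :=
        by have h := (Real.hasDerivAt_log (by linarith : (1:ℝ) + Real.sin x ≠ 0)).comp x hsp; exact h
      exact (hsp.mul hl).div_const 2
    have hcb : HasDerivAt (fun θ : ℝ => 1 + b * Real.cos θ) (b * -Real.sin x) x := by
      simpa using ((Real.hasDerivAt_cos x).const_mul b).const_add 1
    have h5 : HasDerivAt (fun θ : ℝ => Real.sin θ * Real.log (1 + b * Real.cos θ))
        (Real.cos x * Real.log (1 + b * Real.cos x)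
          + Real.sin x * ((1 + b * Real.cos x)⁻¹ * (b * -Real.sin x))) x := by
      have hl : HasDerivAt (fun θ : ℝ => Real.log (1 + b * Real.cos θ))
          ((1 + b * Real.cos x)⁻¹ * (b * -Real.sin x)) x :=
        by have h := (Real.hasDerivAt_log hbc.ne').comp x hcb; exact h
      exact (Real.hasDerivAt_sin x).mul hl
    have h6 : HasDerivAt (fun θ : ℝ => Real.sin θ * Real.log b)
        (Real.cos x * Real.log b) x := (Real.hasDerivAt_sin x).mul_const _
    have hbig := ((((h1.sub (h2.const_mul (2*c))).add h3).sub h4).add h5).sub h6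
    apply HasDerivAt.hasDerivWithinAt
    have harc : 2 * c * (1 / (1 + (k * Real.tan (x/2)) ^ 2)
          * (k * (1 / Real.cos (x/2) ^ 2 * (1/2))))
        = (1 - b^2) / (b * (1 + b * Real.cos x)) := by
      have ht : Real.tan (x/2) = Real.sin (x/2) / Real.cos (x/2) := Real.tan_eq_sin_div_cos _
      have hden : (1 + (k * Real.tan (x/2)) ^ 2) * Real.cos (x/2)^2
          = (1 + b * Real.cos x) / (1 + b) := by
        rw [ht]
        have h : (1 + (k * (Real.sin (x/2) / Real.cos (x/2))) ^ 2) * Real.cos (x/2) ^ 2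
            = Real.cos (x/2)^2 + k^2 * Real.sin (x/2)^2 := by
          field_simp
        rw [h, hk2, hshalf, hcosx2]
        field_simp
        ring
      have hd0 : (0:ℝ) < 1 + (k * Real.tan (x/2))^2 := by positivity
      calc 2 * c * (1 / (1 + (k * Real.tan (x/2)) ^ 2)
            * (k * (1 / Real.cos (x/2) ^ 2 * (1/2))))
          = (c * k) / ((1 + (k * Real.tan (x/2)) ^ 2) * Real.cos (x/2)^2) := by
            field_simp
        _ = (c * k) / ((1 + b * Real.cos x) / (1 + b)) := by rw [hden]
        _ = (1 - b^2) / (b * (1 + b * Real.cos x)) := by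
            rw [hck]
            field_simp
            ring
    have hlogc : Real.log (Real.cos x)
        = (Real.log (1 - Real.sin x) + Real.log (1 + Real.sin x)) / 2 := by
      have h := Real.log_mul hcos.ne' hcos.ne'
      rw [show Real.cos x * Real.cos x = (1 - Real.sin x) * (1 + Real.sin x) by nlinarith,
        Real.log_mul (by linarith) (by linarith)] at h
      linarith
    have hlogf : Real.log (1 + 1 / (b * Real.cos x))
        = Real.log (1 + b * Real.cos x) - Real.log b - Real.log (Real.cos x) := by
      have h1 : 1 + 1 / (b * Real.cos x) = (1 + b * Real.cos x) / (b * Real.cos x) := by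
        field_simp
        ring
      rw [h1, Real.log_div (by positivity) (by positivity), Real.log_mul hbne hcos.ne']
      ring
    have e3 : (1 - Real.sin x) * ((1 - Real.sin x)⁻¹ * -Real.cos x) = -Real.cos x := by
      rw [← mul_assoc, mul_inv_cancel₀ (by linarith : (1:ℝ) - Real.sin x ≠ 0), one_mul]
    have e4 : (1 + Real.sin x) * ((1 + Real.sin x)⁻¹ * Real.cos x) = Real.cos x := by
      rw [← mul_assoc, mul_inv_cancel₀ (by linarith : (1:ℝ) + Real.sin x ≠ 0), one_mul]
    have e5 : Real.sin x * ((1 + b * Real.cos x)⁻¹ * (b * -Real.sin x))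
        = -(b * (1 - Real.cos x ^ 2)) / (1 + b * Real.cos x) := by
      rw [← hsin2, eq_div_iff hbc.ne']
      field_simp
    convert hbig using 1
    · rw [hFdef]; rfl
    rw [hlogf, hlogc, harc, e3, e4, e5]
    field_simp
    ring
  have hFTC := intervalIntegral.integral_eq_sub_of_hasDeriv_right_of_le hle hcont hderiv hint
  have e1 : F (π/2) = π/(2*b) - 2*c*Real.arctan k - Real.log 2 - Real.log b := by
    have h1 : Real.tan (π/2/2) = 1 := by
      rw [show π/2/2 = π/4 by ring, Real.tan_pi_div_four]
    simp only [hFdef, h1, Real.sin_pi_div_two, Real.cos_pi_div_two, mul_one, mul_zero,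
      Real.log_zero, sub_self, zero_mul, add_zero, Real.log_one, one_mul]
    ring
  have e2 : F (-(π/2)) = -(π/(2*b)) + 2*c*Real.arctan k + Real.log 2 + Real.log b := by
    have h1 : Real.tan (-(π/2)/2) = -1 := by
      rw [show -(π/2)/2 = -(π/4) by ring, Real.tan_neg, Real.tan_pi_div_four]
    simp only [hFdef, h1, Real.sin_neg, Real.cos_neg, Real.sin_pi_div_two, Real.cos_pi_div_two,
      mul_neg_one, Real.arctan_neg, mul_zero, Real.log_zero, zero_mul, add_zero,
      Real.log_one, mul_one]
    ring
  rw [hFTC, e1, e2, Real.log_mul (two_ne_zero) hbne]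
  ring

open Real in
theorem stmt7 (r a b R : ℝ) (hr : r > 0) (ha : a > 0) (hb0 : 0 < b) (hb1 : b ≤ 1)
    (hR : R = a * r + b) :
    (1 / (π * R)) * ∫ θ in (-(π / 2))..(π / 2), Real.cos θ * Real.log (1 + 1 / (b * Real.cos θ)) ≤
      (1 / (π * R)) * (π / b - 4 * Real.sqrt (b⁻¹ ^ 2 - 1) *
        Real.arctan (Real.sqrt ((b⁻¹ - 1) / (b⁻¹ + 1))) - 2 * Real.log (2 * b)) := by
  rw [key_integral b hb0 hb1]
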